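/- Let A be a p×q×r complex hypermatrix with 2 ≤ p ≤ q ≤ r, and suppose (P,Q,T) ∈ K_A with P = Q = T = (1,0,…,0). Then a_{11k} = 0 for all k, a_{1j1} = 0 for all j, a_{i11} = 0 for all i, and the Jacobian matrix of the scheme 𝓛 at P has all entries in its first column equal to zero, while the entry in row i (2 ≤ i ≤ p) and column indexed by α = (k_1,…,k_q) equals the determinant of the q×q matrix whose first row is (a_{i1k_1},…,a_{i1k_q}) and whose subsequent rows are (a_{1jk_1},…,a_{1jk_q}) for j = 2,…,q. Consequently rank J_𝓛(P) ≤ min{r−q, p−1}, so P is a degenerate point of 𝓛. -/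

import Mathlib

open Matrix

/-- The q×r matrix of linear forms in x associated to A, evaluated at x. -/
noncomputable def Lmat {p q r : ℕ} (A : Fin p → Fin q → Fin r → ℂ) (x : Fin p → ℂ) :
    Matrix (Fin q) (Fin r) ℂ := Matrix.of fun j k => ∑ i, A i j k * x i

/-- The p×r matrix of linear forms in y associated to A, evaluated at y. -/
noncomputable def Mmat {p q r : ℕ} (A : Fin p → Fin q → Fin r → ℂ) (y : Fin q → ℂ) :
    Matrix (Fin p) (Fin r) ℂ := Matrix.of fun i k => ∑ j, A i j k * y j

/-- The p×q matrix of linear forms in z associated to A, evaluated at z. -/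
noncomputable def Nmat {p q r : ℕ} (A : Fin p → Fin q → Fin r → ℂ) (z : Fin r → ℂ) :
    Matrix (Fin p) (Fin q) ℂ := Matrix.of fun i j => ∑ k, A i j k * z k

lemma my_diff_prod {E ι : Type*} [NormedAddCommGroup E] [NormedSpace ℂ E] (u : Finset ι)
    (f : ι → E → ℂ) (h : ∀ i, Differentiable ℂ (f i)) :
    Differentiable ℂ (fun x => ∏ i ∈ u, f i x) := by
  classical
  induction u using Finset.induction with
  | empty => simp
  | insert _ _ hnot ih => simp only [Finset.prod_insert hnot]; exact (h _).mul ih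

lemma my_diff_det {n : Type*} [Fintype n] [DecidableEq n] {E : Type*} [NormedAddCommGroup E]
    [NormedSpace ℂ E] (M : E → Matrix n n ℂ) (h : ∀ i j, Differentiable ℂ fun x => M x i j) :
    Differentiable ℂ fun x => (M x).det := by
  simp only [Matrix.det_apply']
  apply Differentiable.fun_sum
  intro σ _
  exact Differentiable.const_mul (my_diff_prod _ _ fun i => h _ _) _

lemma my_line_deriv {E : Type*} [NormedAddCommGroup E] [NormedSpace ℂ E]
    (f : E → ℂ) (P : E) (hf : DifferentiableAt ℂ f P) (v : E) :
    HasDerivAt (fun t : ℂ => f (P + t • v)) (fderiv ℂ f P v) 0 := by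
  have hline : HasDerivAt (fun t : ℂ => P + t • v) v 0 := by
    simpa using ((hasDerivAt_id (0:ℂ)).smul_const v).const_add P
  have h2 : HasFDerivAt f (fderiv ℂ f P) (P + (0:ℂ) • v) := by
    simpa using hf.hasFDerivAt
  exact h2.comp_hasDerivAt 0 hline

lemma my_key (p q : ℕ) (hp : 0 < p) (hq : 0 < q) (B : Fin p → Fin q → Fin q → ℂ)
    (h0 : ∀ m, B ⟨0,hp⟩ ⟨0,hq⟩ m = 0) (i : Fin p) :
    fderiv ℂ (fun x : Fin p → ℂ => Matrix.det (Matrix.of fun j m => ∑ i', B i' j m * x i'))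
      (Pi.single (⟨0,hp⟩ : Fin p) 1) (Pi.single i 1)
    = Matrix.det (Matrix.of fun j m =>
        if j = (⟨0,hq⟩ : Fin q) then B i ⟨0,hq⟩ m else B ⟨0,hp⟩ j m) := by
  set z : Fin p := ⟨0, hp⟩ with hz
  set z' : Fin q := ⟨0, hq⟩ with hz'
  set f : (Fin p → ℂ) → ℂ :=
    fun x => Matrix.det (Matrix.of fun j m => ∑ i', B i' j m * x i') with hf
  set P : Fin p → ℂ := Pi.single z 1 with hP
  set v : Fin p → ℂ := Pi.single i 1 with hv
  have hdf : Differentiable ℂ f := by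
    apply my_diff_det
    intro j m
    simp only [Matrix.of_apply]
    apply Differentiable.fun_sum
    intro i' _
    exact ((ContinuousLinearMap.proj i' : (Fin p → ℂ) →L[ℂ] ℂ).differentiable).const_mul _
  set K : ℂ → Matrix (Fin q) (Fin q) ℂ := fun t => Matrix.of fun j m =>
    if j = z' then B i z' m else B z j m + t * B i j m with hKdef
  set w : Fin q → ℂ := fun m => B i z' m with hw
  have hsum : ∀ (t : ℂ) (j : Fin q) (m : Fin q),
      ∑ i', B i' j m * (P + t • v) i' = B z j m + t * B i j m := by
    intro t j m
    simp only [hP, hv, Pi.add_apply, Pi.smul_apply, Pi.single_apply, smul_eq_mul, mul_add,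
      Finset.sum_add_distrib, mul_ite, mul_one, mul_zero, Finset.sum_ite_eq',
      Finset.mem_univ, if_true]
    ring
  have hmat : ∀ t : ℂ, (Matrix.of fun j m => ∑ i', B i' j m * (P + t • v) i')
      = Matrix.updateRow (K t) z' (t • w) := by
    intro t
    ext j m
    by_cases hj : j = z'
    · subst hj
      rw [Matrix.updateRow_self, Matrix.of_apply, hsum t, h0, zero_add]
      simp [hw]
    · rw [Matrix.updateRow_ne hj, Matrix.of_apply, hsum t]
      simp [hKdef, hj]
  have key1 : ∀ t : ℂ, f (P + t • v) = t * (K t).det := by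
    intro t
    show Matrix.det _ = _
    rw [hmat t, Matrix.det_updateRow_smul]
    congr 1
    have hwk : w = K t z' := by funext m; simp [hKdef, hw]
    rw [hwk, Matrix.updateRow_eq_self]
  have hK : Differentiable ℂ (fun t : ℂ => (K t).det) := by
    apply my_diff_det
    intro j m
    by_cases hj : j = z'
    · simp only [hKdef, Matrix.of_apply, if_pos hj]
      exact differentiable_const _
    · simp only [hKdef, Matrix.of_apply, if_neg hj]
      exact (differentiable_id.mul_const _).const_add _
  have hg : HasDerivAt (fun t : ℂ => t * (K t).det) ((K 0).det) 0 := by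
    have := (hasDerivAt_id (0:ℂ)).mul ((hK 0).hasDerivAt)
    exact this.congr_deriv (by simp)
  have hline := my_line_deriv f P (hdf P) v
  rw [show (fun t : ℂ => f (P + t • v)) = fun t : ℂ => t * (K t).det from funext key1] at hline
  have := hline.unique hg
  rw [this]
  congr 1
  ext j m
  by_cases hj : j = z' <;> simp [hKdef, hj]

open Module in
noncomputable def phiMap (q r : ℕ) (zq : Fin q) (C : Fin q → Fin r → ℂ) :
    (Fin r → ℂ) →ₗ[ℂ] ((Fin q → Fin r) → ℂ) where
  toFun v s := (Matrix.updateRow (Matrix.of fun j m => C j (s m)) zq (fun m => v (s m))).det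
  map_add' v w := by
    funext s
    have h : (fun m => (v + w) (s m)) = (fun m => v (s m)) + (fun m => w (s m)) := rfl
    show (Matrix.updateRow _ zq (fun m => (v + w) (s m))).det = _
    rw [h, Matrix.det_updateRow_add]
    rfl
  map_smul' c v := by
    funext s
    have h : (fun m => (c • v) (s m)) = c • (fun m => v (s m)) := rfl
    show (Matrix.updateRow _ zq (fun m => (c • v) (s m))).det = _
    rw [h, Matrix.det_updateRow_smul]
    rfl

lemma phiMap_apply (q r : ℕ) (zq : Fin q) (C : Fin q → Fin r → ℂ) (v : Fin r → ℂ)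
    (s : Fin q → Fin r) :
    phiMap q r zq C v s
      = (Matrix.updateRow (Matrix.of fun j m => C j (s m)) zq (fun m => v (s m))).det := rfl

set_option maxHeartbeats 1000000 in
set_option synthInstance.maxHeartbeats 1000000 in
open Module in
lemma my_rank (p q r : ℕ) (hp : 0 < p) (hq : 0 < q) (hr : 0 < r)
    (hpq : p ≤ q) (hqr : q ≤ r)
    (A : Fin p → Fin q → Fin r → ℂ)
    (hA1 : ∀ k, A ⟨0,hp⟩ ⟨0,hq⟩ k = 0)
    (hA2 : ∀ j, A ⟨0,hp⟩ j ⟨0,hr⟩ = 0)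
    (hA3 : ∀ i, A i ⟨0,hq⟩ ⟨0,hr⟩ = 0) :
    (Matrix.of fun (i : Fin p) (s : Fin q → Fin r) =>
      Matrix.det (Matrix.of fun j m =>
        if j = (⟨0,hq⟩ : Fin q) then A i ⟨0,hq⟩ (s m) else A ⟨0,hp⟩ j (s m))).rank
      ≤ min (r - q) (p - 1) := by
  classical
  set zp : Fin p := ⟨0, hp⟩
  set zq : Fin q := ⟨0, hq⟩
  set zr : Fin r := ⟨0, hr⟩
  set J : Matrix (Fin p) (Fin q → Fin r) ℂ :=
    Matrix.of fun (i : Fin p) (s : Fin q → Fin r) =>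
      Matrix.det (Matrix.of fun j m =>
        if j = zq then A i zq (s m) else A zp j (s m)) with hJ
  have hrep : ∀ (v : Fin r → ℂ) (s : Fin q → Fin r),
      (Matrix.of fun j m => if j = zq then v (s m) else A zp j (s m))
        = Matrix.updateRow (Matrix.of fun j m => A zp j (s m)) zq (fun m => v (s m)) := by
    intro v s
    ext j m
    by_cases hj : j = zq
    · subst hj; rw [Matrix.updateRow_self]; simp
    · rw [Matrix.updateRow_ne hj]; simp [hj]
  set Φ : (Fin r → ℂ) →ₗ[ℂ] ((Fin q → Fin r) → ℂ) :=
    phiMap q r zq (fun j k => A zp j k) with hΦ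
  have hΦap : ∀ (v : Fin r → ℂ) (s : Fin q → Fin r),
      Φ v s = (Matrix.updateRow (Matrix.of fun j m => A zp j (s m)) zq
        (fun m => v (s m))).det := fun v s => rfl
  have hJΦ : ∀ (i : Fin p) (s : Fin q → Fin r), J i s = Φ (fun k => A i zq k) s := by
    intro i s
    rw [hΦap]
    show (Matrix.of fun j m => if j = zq then A i zq (s m) else A zp j (s m)).det = _
    rw [hrep (fun k => A i zq k) s]
  set U : Submodule ℂ (Fin r → ℂ) :=
    LinearMap.ker (LinearMap.proj zr : (Fin r → ℂ) →ₗ[ℂ] ℂ) with hU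
  have hUfr : finrank ℂ U = r - 1 := by
    rw [hU]
    have h := LinearMap.finrank_range_add_finrank_ker
      (LinearMap.proj zr : (Fin r → ℂ) →ₗ[ℂ] ℂ)
    have hsurj : LinearMap.range (LinearMap.proj zr : (Fin r → ℂ) →ₗ[ℂ] ℂ) = ⊤ := by
      rw [LinearMap.range_eq_top]
      intro c
      exact ⟨Pi.single zr c, by simp [LinearMap.proj_apply]⟩
    rw [hsurj, finrank_top] at h
    simp only [Module.finrank_fintype_fun_eq_card, Fintype.card_fin, Module.finrank_self] at h
    omega
  have hb1 : J.rank ≤ p - 1 := by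
    have hrow0 : ∀ s, J zp s = 0 := by
      intro s
      show (Matrix.of fun j m => if j = zq then A zp zq (s m) else A zp j (s m)).det = 0
      apply Matrix.det_eq_zero_of_row_eq_zero zq
      intro m
      simp [hA1]
    have hle : LinearMap.range J.mulVecLin ≤
        LinearMap.ker (LinearMap.proj zp : (Fin p → ℂ) →ₗ[ℂ] ℂ) := by
      rintro u ⟨c, rfl⟩
      simp only [LinearMap.mem_ker, LinearMap.proj_apply, Matrix.mulVecLin_apply]
      show (J.mulVec c) zp = 0
      simp [Matrix.mulVec, dotProduct, hrow0]
    have hmono := Submodule.finrank_mono hle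
    have hWfr : finrank ℂ (LinearMap.ker (LinearMap.proj zp : (Fin p → ℂ) →ₗ[ℂ] ℂ))
        = p - 1 := by
      have h := LinearMap.finrank_range_add_finrank_ker
        (LinearMap.proj zp : (Fin p → ℂ) →ₗ[ℂ] ℂ)
      have hsurj : LinearMap.range (LinearMap.proj zp : (Fin p → ℂ) →ₗ[ℂ] ℂ) = ⊤ := by
        rw [LinearMap.range_eq_top]
        intro c
        exact ⟨Pi.single zp c, by simp [LinearMap.proj_apply]⟩
      rw [hsurj, finrank_top] at h
      simp only [Module.finrank_fintype_fun_eq_card, Fintype.card_fin, Module.finrank_self] at h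
      omega
    calc J.rank = finrank ℂ (LinearMap.range J.mulVecLin) := rfl
      _ ≤ _ := hmono
      _ = p - 1 := hWfr
  have hb2 : J.rank ≤ r - q := by
    have hle : LinearMap.range (Jᵀ.mulVecLin) ≤ Submodule.map Φ U := by
      rintro u ⟨c, rfl⟩
      refine ⟨∑ i', c i' • (fun k => A i' zq k), ?_, ?_⟩
      · apply Submodule.sum_mem
        intro i' _
        apply Submodule.smul_mem
        simp only [hU, LinearMap.mem_ker, LinearMap.proj_apply]
        exact hA3 i'
      · rw [map_sum]
        funext s
        simp only [Matrix.mulVecLin_apply, Finset.sum_apply, LinearMap.map_smul,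
          Pi.smul_apply, smul_eq_mul]
        show _ = Jᵀ.mulVec c s
        simp only [Matrix.mulVec, dotProduct, Matrix.transpose_apply]
        refine Finset.sum_congr rfl fun i' _ => ?_
        rw [hJΦ i' s, mul_comm]
    have hle2 := Submodule.finrank_mono hle
    letI : AddCommGroup ↥(LinearMap.ker (Φ.domRestrict U)) := Submodule.addCommGroup _
    letI : Module ℂ ↥(LinearMap.ker (Φ.domRestrict U)) := Submodule.module _
    have hdom := LinearMap.finrank_range_add_finrank_ker (Φ.domRestrict U)
    rw [LinearMap.range_domRestrict] at hdom
    have hmap : finrank ℂ (Submodule.map Φ U) ≤ r - q := by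
      by_cases hind : LinearIndependent ℂ
          (fun j : {j : Fin q // j ≠ zq} => (fun k => A zp j.1 k : Fin r → ℂ))
      · have hmemU : ∀ j : {j : Fin q // j ≠ zq}, (fun k => A zp j.1 k : Fin r → ℂ) ∈ U := by
          intro j
          simp only [hU, LinearMap.mem_ker, LinearMap.proj_apply]
          exact hA2 j.1
        have hmemker : ∀ j : {j : Fin q // j ≠ zq}, Φ (fun k => A zp j.1 k) = 0 := by
          intro j
          funext s
          simp only [Pi.zero_apply]
          rw [hΦap]
          apply Matrix.det_zero_of_row_eq (show zq ≠ j.1 from Ne.symm j.2)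
          rw [Matrix.updateRow_self, Matrix.updateRow_ne j.2]
          rfl
        have hmemker2 : ∀ j : {j : Fin q // j ≠ zq},
            (⟨(fun k => A zp j.1 k), hmemU j⟩ : U) ∈ LinearMap.ker (Φ.domRestrict U) := by
          intro j
          rw [LinearMap.mem_ker, LinearMap.domRestrict_apply]
          exact hmemker j
        have hindfam : LinearIndependent ℂ
            (fun j : {j : Fin q // j ≠ zq} =>
              (⟨⟨(fun k => A zp j.1 k), hmemU j⟩, hmemker2 j⟩ :
                LinearMap.ker (Φ.domRestrict U))) := by
          apply LinearIndependent.of_comp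
            (U.subtype.comp (LinearMap.ker (Φ.domRestrict U)).subtype)
          exact hind
        have hcard := hindfam.fintype_card_le_finrank
        have hcardeq : Fintype.card {j : Fin q // j ≠ zq} = q - 1 := by
          have h1 := Fintype.card_subtype_compl (fun j : Fin q => j = zq)
          have h2 : Fintype.card {j : Fin q // j = zq} = 1 := Fintype.card_subtype_eq zq
          simp only [h2, Fintype.card_fin] at h1
          convert h1 using 2
        omega
      · rw [Fintype.not_linearIndependent_iff] at hind
        obtain ⟨g, hg0, j0, hj0⟩ := hind
        have hPhi0 : ∀ v : Fin r → ℂ, Φ v = 0 := by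
          intro v
          funext s
          simp only [Pi.zero_apply]
          rw [hΦap, ← Matrix.exists_vecMul_eq_zero_iff]
          refine ⟨(fun j => if h : j = zq then 0 else g ⟨j, h⟩), ?_, ?_⟩
          · intro hzero
            apply hj0
            have := congrFun hzero j0.1
            simpa [dif_neg j0.2] using this
          · funext m
            have hg0' : ∑ j : {j : Fin q // j ≠ zq}, g j * A zp j.1 (s m) = 0 := by
              have := congrFun hg0 (s m)
              simpa using this
            simp only [Matrix.vecMul, dotProduct, Pi.zero_apply]
            have hterm : ∀ j : Fin q,
                (if h : j = zq then (0:ℂ) else g ⟨j, h⟩) *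
                  (Matrix.updateRow (Matrix.of fun j' m' => A zp j' (s m')) zq
                    (fun m' => v (s m'))) j m
                = (if h : j = zq then 0 else g ⟨j, h⟩ * A zp j (s m)) := by
              intro j
              by_cases h : j = zq
              · simp [h]
              · rw [dif_neg h, dif_neg h, Matrix.updateRow_ne h]
                simp
            rw [Finset.sum_congr rfl (fun j _ => hterm j)]
            rw [← Finset.sum_erase_add _ _ (Finset.mem_univ zq), dif_pos rfl, add_zero]
            rw [Finset.sum_subtype (p := fun j => j ≠ zq) (Finset.univ.erase zq)
              (fun x => by simp [Finset.mem_erase]) _]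
            rw [← hg0']
            refine Finset.sum_congr rfl fun j _ => ?_
            rw [dif_neg j.2]
        have hbot : Submodule.map Φ U = ⊥ := by
          rw [Submodule.eq_bot_iff]
          rintro x ⟨v, -, rfl⟩
          exact hPhi0 v
        rw [hbot, finrank_bot]
        exact Nat.zero_le _
    calc J.rank = Jᵀ.rank := (Matrix.rank_transpose J).symm
      _ = finrank ℂ (LinearMap.range Jᵀ.mulVecLin) := rfl
      _ ≤ finrank ℂ (Submodule.map Φ U) := hle2
      _ ≤ r - q := hmap
  exact le_min hb2 hb1

/-- if (P,Q,T) ∈ K_A with P = Q = T = (1,0,…,0), then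
a_{11k} = a_{1j1} = a_{i11} = 0, the first column of the Jacobian of 𝓛 at P
vanishes, each entry ∂_i L_α(P) equals the determinant of the q×q matrix whose
first row is (a_{i1k_1},…,a_{i1k_q}) and whose other rows are
(a_{1jk_1},…,a_{1jk_q}), and rank J_𝓛(P) ≤ min(r-q, p-1), so P is a degenerate
point of 𝓛. -/
theorem kernel_point_is_degenerate_for_L (p q r : ℕ)
    (hp : 2 ≤ p) (hpq : p ≤ q) (hqr : q ≤ r)
    (A : Fin p → Fin q → Fin r → ℂ)
    (h1 : Matrix.vecMul (Pi.single (⟨0, by omega⟩ : Fin q) (1 : ℂ))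
      (Lmat A (Pi.single (⟨0, by omega⟩ : Fin p) (1 : ℂ))) = 0)
    (h2 : Matrix.vecMul (Pi.single (⟨0, by omega⟩ : Fin p) (1 : ℂ))
      (Nmat A (Pi.single (⟨0, by omega⟩ : Fin r) (1 : ℂ))) = 0)
    (h3 : (Mmat A (Pi.single (⟨0, by omega⟩ : Fin q) (1 : ℂ))).mulVec
      (Pi.single (⟨0, by omega⟩ : Fin r) (1 : ℂ)) = 0) :
    (∀ k : Fin r, A ⟨0, by omega⟩ ⟨0, by omega⟩ k = 0) ∧
    (∀ j : Fin q, A ⟨0, by omega⟩ j ⟨0, by omega⟩ = 0) ∧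
    (∀ i : Fin p, A i ⟨0, by omega⟩ ⟨0, by omega⟩ = 0) ∧
    (∀ s : Fin q → Fin r,
      fderiv ℂ (fun x : Fin p → ℂ =>
          Matrix.det (Matrix.of fun (j m : Fin q) => ∑ i, A i j (s m) * x i))
        (Pi.single (⟨0, by omega⟩ : Fin p) (1 : ℂ))
        (Pi.single (⟨0, by omega⟩ : Fin p) (1 : ℂ)) = 0) ∧
    (∀ (i : Fin p) (s : Fin q → Fin r),
      fderiv ℂ (fun x : Fin p → ℂ =>
          Matrix.det (Matrix.of fun (j m : Fin q) => ∑ i', A i' j (s m) * x i'))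
        (Pi.single (⟨0, by omega⟩ : Fin p) (1 : ℂ))
        (Pi.single i (1 : ℂ)) =
      Matrix.det (Matrix.of fun (j m : Fin q) =>
        if j = (⟨0, by omega⟩ : Fin q) then A i ⟨0, by omega⟩ (s m)
        else A ⟨0, by omega⟩ j (s m))) ∧
    (Matrix.of fun (i : Fin p) (s : Fin q → Fin r) =>
      fderiv ℂ (fun x : Fin p → ℂ =>
          Matrix.det (Matrix.of fun (j m : Fin q) => ∑ i', A i' j (s m) * x i'))
        (Pi.single (⟨0, by omega⟩ : Fin p) (1 : ℂ))
        (Pi.single i (1 : ℂ))).rank ≤ min (r - q) (p - 1) := by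
  classical
  have hq : 0 < q := by omega
  have hr : 0 < r := by omega
  have hp0 : 0 < p := by omega
  have c1 : ∀ k : Fin r, A ⟨0, by omega⟩ ⟨0, by omega⟩ k = 0 := by
    intro k
    have := congrFun h1 k
    simpa [Matrix.vecMul, dotProduct, Lmat, Pi.single_apply, mul_ite, ite_mul,
      Finset.sum_ite_eq, Finset.sum_ite_eq'] using this
  have c2 : ∀ j : Fin q, A ⟨0, by omega⟩ j ⟨0, by omega⟩ = 0 := by
    intro j
    have := congrFun h2 j
    simpa [Matrix.vecMul, dotProduct, Nmat, Pi.single_apply, mul_ite, ite_mul,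
      Finset.sum_ite_eq, Finset.sum_ite_eq'] using this
  have c3 : ∀ i : Fin p, A i ⟨0, by omega⟩ ⟨0, by omega⟩ = 0 := by
    intro i
    have := congrFun h3 i
    simpa [Matrix.mulVec, dotProduct, Mmat, Pi.single_apply, mul_ite, ite_mul,
      Finset.sum_ite_eq, Finset.sum_ite_eq'] using this
  have c5 : ∀ (i : Fin p) (s : Fin q → Fin r),
      fderiv ℂ (fun x : Fin p → ℂ =>
          Matrix.det (Matrix.of fun (j m : Fin q) => ∑ i', A i' j (s m) * x i'))
        (Pi.single (⟨0, by omega⟩ : Fin p) (1 : ℂ))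
        (Pi.single i (1 : ℂ)) =
      Matrix.det (Matrix.of fun (j m : Fin q) =>
        if j = (⟨0, by omega⟩ : Fin q) then A i ⟨0, by omega⟩ (s m)
        else A ⟨0, by omega⟩ j (s m)) := by
    intro i s
    exact my_key p q hp0 hq (fun i' j m => A i' j (s m)) (fun m => c1 (s m)) i
  have c4 : ∀ s : Fin q → Fin r,
      fderiv ℂ (fun x : Fin p → ℂ =>
          Matrix.det (Matrix.of fun (j m : Fin q) => ∑ i, A i j (s m) * x i))
        (Pi.single (⟨0, by omega⟩ : Fin p) (1 : ℂ))
        (Pi.single (⟨0, by omega⟩ : Fin p) (1 : ℂ)) = 0 := by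
    intro s
    rw [c5 ⟨0, by omega⟩ s]
    apply Matrix.det_eq_zero_of_row_eq_zero (⟨0, by omega⟩ : Fin q)
    intro m
    simp [c1]
  refine ⟨c1, c2, c3, c4, c5, ?_⟩
  have hmat : (Matrix.of fun (i : Fin p) (s : Fin q → Fin r) =>
      fderiv ℂ (fun x : Fin p → ℂ =>
          Matrix.det (Matrix.of fun (j m : Fin q) => ∑ i', A i' j (s m) * x i'))
        (Pi.single (⟨0, by omega⟩ : Fin p) (1 : ℂ))
        (Pi.single i (1 : ℂ)))
      = Matrix.of fun (i : Fin p) (s : Fin q → Fin r) =>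
        Matrix.det (Matrix.of fun (j m : Fin q) =>
          if j = (⟨0, hq⟩ : Fin q) then A i ⟨0, hq⟩ (s m)
          else A ⟨0, hp0⟩ j (s m)) := by
    ext i s
    exact c5 i s
  rw [hmat]
  exact my_rank p q r hp0 hq hr hpq hqr A c1 c2 c3
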